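/- Let k be a field of characteristic zero, N > 1, q ∈ k a primitive N-th root of unity, and A a k-algebra with an element x such that x^N = 0. Then exp_q(x) is invertible in A, with two-sided inverse ∑_{n=0}^{N−1} ((−1)^n q^{n(n−1)/2}/(n)!_q) · x^n. -/

import Mathlib

/-- The q-integer `(n)_q = 1 + q + ⋯ + q^{n-1}`. -/
def qNat {k : Type*} [Field k] (q : k) (n : ℕ) : k :=
  ∑ i ∈ Finset.range n, q ^ i

/-- The q-factorial `(n)!_q = (1)_q (2)_q ⋯ (n)_q`, with `(0)!_q = 1`. -/
def qFact {k : Type*} [Field k] (q : k) (n : ℕ) : k :=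
  ∏ i ∈ Finset.range n, qNat q (i + 1)

/-- The truncated q-exponential `exp_q(z) = ∑_{n=0}^{N-1} (1/(n)!_q) · z^n`. -/
noncomputable def qExp {k A : Type*} [Field k] [Ring A] [Algebra k A]
    (q : k) (N : ℕ) (z : A) : A :=
  ∑ n ∈ Finset.range N, (qFact q n)⁻¹ • z ^ n

section Aux

variable {k : Type*} [Field k]

lemma qNat_add (q : k) (a c : ℕ) : qNat q (a + c) = qNat q a + q ^ a * qNat q c := by
  simp only [qNat, Finset.sum_range_add, Finset.mul_sum, pow_add]

lemma qFact_succ (q : k) (n : ℕ) : qFact q (n + 1) = qFact q n * qNat q (n + 1) := by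
  simp [qFact, Finset.prod_range_succ]

lemma qNat_ne_zero {N : ℕ} (hN : 1 < N) {q : k} (hq : IsPrimitiveRoot q N)
    {n : ℕ} (hn0 : 0 < n) (hnN : n < N) : qNat q n ≠ 0 := by
  have hq1 : q ≠ 1 := hq.ne_one hN
  have : qNat q n = (q ^ n - 1) / (q - 1) := geom_sum_eq hq1 n
  rw [this]
  exact div_ne_zero (sub_ne_zero.mpr (hq.pow_ne_one_of_pos_of_lt hn0.ne' hnN))
    (sub_ne_zero.mpr hq1)

lemma qFact_ne_zero {N : ℕ} (hN : 1 < N) {q : k} (hq : IsPrimitiveRoot q N)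
    {n : ℕ} (hnN : n < N) : qFact q n ≠ 0 := by
  rw [qFact, Finset.prod_ne_zero_iff]
  intro i hi
  exact qNat_ne_zero hN hq (Nat.succ_pos i)
    (lt_of_le_of_lt (Nat.succ_le_of_lt (Finset.mem_range.mp hi)) hnN)

lemma tri_succ (b : ℕ) : (b + 1) * ((b + 1) - 1) / 2 = b * (b - 1) / 2 + b := by
  have h : (b + 1) * b = b * (b - 1) + b * 2 := by
    cases b with
    | zero => rfl
    | succ c => simp [Nat.succ_sub_one]; ring
  simp only [Nat.succ_sub_one, h]
  omega

lemma inv_fact_succ {N : ℕ} (hN : 1 < N) {q : k} (hq : IsPrimitiveRoot q N)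
    {b : ℕ} (hb : b + 1 < N) :
    qNat q (b + 1) * (qFact q (b + 1))⁻¹ = (qFact q b)⁻¹ := by
  have h1 : qNat q (b + 1) ≠ 0 := qNat_ne_zero hN hq (Nat.succ_pos b) hb
  rw [qFact_succ, mul_inv, mul_comm (qFact q b)⁻¹, ← mul_assoc, mul_inv_cancel₀ h1, one_mul]

/-- Key combinatorial identity. -/
lemma key_sum {N : ℕ} (hN : 1 < N) {q : k} (hq : IsPrimitiveRoot q N)
    {s : ℕ} (hs : s + 1 < N) :
    ∑ b ∈ Finset.range (s + 2),
      ((-1 : k) ^ b * q ^ (b * (b - 1) / 2)) * (qFact q b)⁻¹ * (qFact q (s + 1 - b))⁻¹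
      = 0 := by
  set f : ℕ → k := fun b => (-1 : k) ^ b * q ^ (b * (b - 1) / 2) with hf
  have hmul : qNat q (s + 1) * (∑ b ∈ Finset.range (s + 2),
      f b * (qFact q b)⁻¹ * (qFact q (s + 1 - b))⁻¹) = 0 := by
    rw [Finset.mul_sum]
    have hsplit : ∀ b ∈ Finset.range (s + 2),
        qNat q (s + 1) * (f b * (qFact q b)⁻¹ * (qFact q (s + 1 - b))⁻¹)
        = f b * qNat q b * (qFact q b)⁻¹ * (qFact q (s + 1 - b))⁻¹
          + f b * q ^ b * (qFact q b)⁻¹ * (qNat q (s + 1 - b) * (qFact q (s + 1 - b))⁻¹) := by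
      intro b hb
      have hble : b ≤ s + 1 := Nat.lt_succ_iff.mp (Finset.mem_range.mp hb)
      have : qNat q (s + 1) = qNat q b + q ^ b * qNat q (s + 1 - b) := by
        conv_lhs => rw [← Nat.add_sub_cancel' hble, qNat_add]
      rw [this]; ring
    rw [Finset.sum_congr rfl hsplit, Finset.sum_add_distrib]
    have hA : ∑ b ∈ Finset.range (s + 2),
        f b * qNat q b * (qFact q b)⁻¹ * (qFact q (s + 1 - b))⁻¹
        = ∑ b ∈ Finset.range (s + 1),
          -(f b * q ^ b * (qFact q b)⁻¹ * (qFact q (s - b))⁻¹) := by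
      rw [Finset.sum_range_succ']
      have h0 : f 0 * qNat q 0 * (qFact q 0)⁻¹ * (qFact q (s + 1 - 0))⁻¹ = 0 := by
        simp [qNat]
      rw [h0, add_zero]
      refine Finset.sum_congr rfl fun b hb => ?_
      have hbs : b < s + 1 := Finset.mem_range.mp hb
      have hb1 : b + 1 < N := lt_of_le_of_lt (by omega) hs
      have hsb : s + 1 - (b + 1) = s - b := by omega
      have hfsucc : f (b + 1) = -(f b * q ^ b) := by
        simp only [hf, tri_succ, pow_succ, pow_add]; ring
      rw [hsb, hfsucc]
      have : f b * q ^ b * (qNat q (b + 1) * (qFact q (b + 1))⁻¹) * (qFact q (s - b))⁻¹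
          = f b * q ^ b * (qFact q b)⁻¹ * (qFact q (s - b))⁻¹ := by
        rw [inv_fact_succ hN hq hb1]
      rw [← this]; ring
    have hB : ∑ b ∈ Finset.range (s + 2),
        f b * q ^ b * (qFact q b)⁻¹ * (qNat q (s + 1 - b) * (qFact q (s + 1 - b))⁻¹)
        = ∑ b ∈ Finset.range (s + 1),
          f b * q ^ b * (qFact q b)⁻¹ * (qFact q (s - b))⁻¹ := by
      rw [Finset.sum_range_succ]
      have h0 : qNat q (s + 1 - (s + 1)) = 0 := by simp [qNat]
      rw [h0]
      simp only [zero_mul, mul_zero, add_zero]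
      refine Finset.sum_congr rfl fun b hb => ?_
      have hbs : b < s + 1 := Finset.mem_range.mp hb
      have hsb : s + 1 - b = (s - b) + 1 := by omega
      have hsb1 : (s - b) + 1 < N := by omega
      rw [hsb, inv_fact_succ hN hq hsb1]
    rw [hA, hB, Finset.sum_neg_distrib, neg_add_cancel]
  have hne : qNat q (s + 1) ≠ 0 := qNat_ne_zero hN hq (Nat.succ_pos s) hs
  exact (mul_eq_zero.mp hmul).resolve_left hne

end Aux

/-- If `x^N = 0` then `exp_q(x)` is invertible with two-sided inverse
`∑_{n=0}^{N-1} ((-1)^n q^{n(n-1)/2}/(n)!_q) · x^n`. -/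
theorem stmt_3 {k A : Type*} [Field k] [CharZero k] [Ring A] [Algebra k A]
    (N : ℕ) (hN : 1 < N) (q : k) (hq : IsPrimitiveRoot q N)
    (x : A) (hx : x ^ N = 0) :
    qExp q N x * (∑ n ∈ Finset.range N,
        ((-1 : k) ^ n * q ^ (n * (n - 1) / 2) / qFact q n) • x ^ n) = 1 ∧
    (∑ n ∈ Finset.range N,
        ((-1 : k) ^ n * q ^ (n * (n - 1) / 2) / qFact q n) • x ^ n) * qExp q N x = 1 := by
  classical
  set c : ℕ → k := fun n => (qFact q n)⁻¹ with hc
  set d : ℕ → k := fun n => (-1 : k) ^ n * q ^ (n * (n - 1) / 2) / qFact q n with hd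
  set P : Polynomial k := ∑ n ∈ Finset.range N, Polynomial.monomial n (c n) with hP
  set Q : Polynomial k := ∑ n ∈ Finset.range N, Polynomial.monomial n (d n) with hQ
  have haevalP : Polynomial.aeval x P = qExp q N x := by
    rw [hP, map_sum, qExp]
    refine Finset.sum_congr rfl fun n _ => ?_
    rw [Polynomial.aeval_monomial, Algebra.smul_def]
  have haevalQ : Polynomial.aeval x Q
      = ∑ n ∈ Finset.range N, ((-1 : k) ^ n * q ^ (n * (n - 1) / 2) / qFact q n) • x ^ n := by
    rw [hQ, map_sum]
    refine Finset.sum_congr rfl fun n _ => ?_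
    rw [Polynomial.aeval_monomial, Algebra.smul_def]
  have hcoeffP : ∀ m < N, P.coeff m = c m := by
    intro m hm
    rw [hP, Polynomial.finset_sum_coeff]
    simp only [Polynomial.coeff_monomial]
    rw [Finset.sum_ite_eq' (Finset.range N) m c, if_pos (Finset.mem_range.mpr hm)]
  have hcoeffQ : ∀ m < N, Q.coeff m = d m := by
    intro m hm
    rw [hQ, Polynomial.finset_sum_coeff]
    simp only [Polynomial.coeff_monomial]
    rw [Finset.sum_ite_eq' (Finset.range N) m d, if_pos (Finset.mem_range.mpr hm)]
  have hkey : ∀ m < N, (P * Q).coeff m = if m = 0 then 1 else 0 := by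
    intro m hm
    rw [Polynomial.coeff_mul, Finset.Nat.sum_antidiagonal_eq_sum_range_succ_mk]
    have hterm : ∀ i ∈ Finset.range (m + 1),
        P.coeff i * Q.coeff (m - i) = c i * d (m - i) := by
      intro i hi
      have hi' : i < m + 1 := Finset.mem_range.mp hi
      rw [hcoeffP i (by omega), hcoeffQ (m - i) (by omega)]
    rw [Finset.sum_congr rfl hterm]
    rcases Nat.eq_zero_or_pos m with hm0 | hm0
    · subst hm0
      simp [hc, hd, qFact]
    · rw [if_neg (Nat.pos_iff_ne_zero.mp hm0)]
      obtain ⟨s, rfl⟩ : ∃ s, m = s + 1 := ⟨m - 1, by omega⟩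
      have hrefl := Finset.sum_range_reflect
        (fun i => c i * d (s + 1 - i)) (s + 2)
      have heq : ∀ b ∈ Finset.range (s + 2),
          c (s + 2 - 1 - b) * d (s + 1 - (s + 2 - 1 - b))
          = ((-1 : k) ^ b * q ^ (b * (b - 1) / 2)) * (qFact q b)⁻¹
              * (qFact q (s + 1 - b))⁻¹ := by
        intro b hb
        have hb' : b < s + 2 := Finset.mem_range.mp hb
        have h1 : s + 2 - 1 - b = s + 1 - b := by omega
        have h2 : s + 1 - (s + 1 - b) = b := by omega
        rw [h1, h2, hc, hd]
        simp only [div_eq_mul_inv]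
        ring
      rw [← hrefl, Finset.sum_congr rfl heq]
      exact key_sum hN hq (by omega)
  have hdvd : (Polynomial.X : Polynomial k) ^ N ∣ P * Q - 1 := by
    rw [Polynomial.X_pow_dvd_iff]
    intro m hm
    rw [Polynomial.coeff_sub, hkey m hm, Polynomial.coeff_one]
    simp
  obtain ⟨R, hR⟩ := hdvd
  have hPQ : P * Q = 1 + Polynomial.X ^ N * R := by
    rw [← hR]; ring
  have hmain : Polynomial.aeval x (P * Q) = 1 := by
    rw [hPQ, map_add, map_one, map_mul, map_pow, Polynomial.aeval_X, hx,
      zero_mul, add_zero]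
  constructor
  · rw [← haevalP, ← haevalQ, ← map_mul, hmain]
  · rw [← haevalP, ← haevalQ, ← map_mul, mul_comm Q P, hmain]
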